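/- arXiv:1605.03472 — 2 statements merged into one kernel-verified Lean document; each statement's English description precedes it below -/
import Mathlib

section
/- Let A ∈ V[∂] be a hereditary differential operator of degree N, written A = Σ_{k=0}^N a_k ∂^k. Then the differential order of each coefficient a_k is at most N + 1. -/
/-- An algebra of differential functions in one variable `u`:
a commutative `ℂ`-algebra with partial derivatives `∂/∂u⁽ⁿ⁾`, a derivation `∂/∂x`,
distinguished elements `u⁽ⁿ⁾`, and the total derivative `∂`. -/
structure DiffAlg (V : Type) [CommRing V] [Algebra ℂ V] where
  pd : ℕ → Derivation ℂ V V
  dx : Derivation ℂ V V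
  u : ℕ → V
  total : Derivation ℂ V V
  pd_comm : ∀ m n f, pd m (pd n f) = pd n (pd m f)
  pd_dx : ∀ n f, pd n (dx f) = dx (pd n f)
  pd_u : ∀ m n, pd m (u n) = if m = n then 1 else 0
  dx_u : ∀ n, dx (u n) = 0
  pdFin : ∀ f, Set.Finite {n | pd n f ≠ 0}
  total_eq : ∀ f, total f = (∑ᶠ n, u (n + 1) * pd n f) + dx f

namespace DiffAlg

variable {V : Type} [CommRing V] [Algebra ℂ V]

/-- The evolutionary vector field `X_F` applied to `f`. -/
noncomputable def evf (A : DiffAlg V) (F f : V) : V :=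
  ∑ᶠ n, (fun x => A.total x)^[n] F * A.pd n f

end DiffAlg

/-- Generalized binomial coefficient `C(k, n)` for `k : ℤ`. -/
def intChoose (k : ℤ) (n : ℕ) : ℤ :=
  (∏ i ∈ Finset.range n, (k - (i : ℤ))) / (n.factorial : ℤ)

namespace DiffAlg

variable {V : Type} [CommRing V] [Algebra ℂ V]

/-- Product of two pseudodifferential operators given by their coefficient functions
(`a m` is the coefficient of `∂^m`), using `∂^k ∘ a = Σ_n C(k,n) a⁽ⁿ⁾ ∂^{k-n}`. -/
noncomputable def mulZ (A : DiffAlg V) (a b : ℤ → V) : ℤ → V := fun m =>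
  ∑ᶠ (k : ℤ), ∑ᶠ (n : ℕ), intChoose k n • (a k * (fun x => A.total x)^[n] (b (m - k + n)))

/-- The Fréchet derivative `D_F` as a pseudodifferential operator. -/
noncomputable def DFz (A : DiffAlg V) (F : V) : ℤ → V := fun m =>
  if 0 ≤ m then A.pd m.toNat F else 0

/-- The Lie derivative `𝓛_F(L) = X_F(L) - [D_F, L]` of a pseudodifferential operator. -/
noncomputable def lieD (A : DiffAlg V) (F : V) (L : ℤ → V) : ℤ → V := fun m =>
  evf A F (L m) - (mulZ A (DFz A F) L m - mulZ A L (DFz A F) m)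

/-- The identity pseudodifferential operator. -/
def onePS : ℤ → V := fun m => if m = 0 then 1 else 0

/-- `L` has degree `N` (as a pseudodifferential operator). -/
def hasDeg (c : ℤ → V) (N : ℤ) : Prop := c N ≠ 0 ∧ ∀ m : ℤ, N < m → c m = 0

/-- Embedding of a differential operator (coefficients indexed by `ℕ`) as a
pseudodifferential operator. -/
def loc (a : ℕ → V) : ℤ → V := fun m => if 0 ≤ m then a m.toNat else 0

end DiffAlg

namespace DiffAlg

variable {V : Type} [CommRing V] [Algebra ℂ V]

/-- Application of the differential operator with coefficients `a` to an element. -/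
noncomputable def opApp (A : DiffAlg V) (a : ℕ → V) (f : V) : V :=
  ∑ᶠ k, a k * (fun x => A.total x)^[k] f

/-- The coefficients of the differential operator `(D_A)_F = Σ_k F⁽ᵏ⁾ D_{a_k}`. -/
noncomputable def dafC (A : DiffAlg V) (a : ℕ → V) (F : V) : ℕ → V := fun j =>
  ∑ᶠ k, (fun x => A.total x)^[k] F * A.pd j (a k)

/-- `A` (with coefficients `a`) is hereditary:
`X_{A(F)}(A) - [(D_A)_F, A] = A ∘ (X_F(A))` for all `F`, as pseudodifferential
operators (coefficientwise). -/
noncomputable def IsHereditary (A : DiffAlg V) (a : ℕ → V) : Prop :=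
  ∀ F : V, ∀ m : ℤ,
    loc (fun j => evf A (opApp A a F) (a j)) m
      - (mulZ A (loc (dafC A a F)) (loc a) m - mulZ A (loc a) (loc (dafC A a F)) m)
    = mulZ A (loc a) (loc (fun j => evf A F (a j))) m

end DiffAlg
namespace DiffAlgAux

open DiffAlg

variable {V : Type} [CommRing V] [Algebra ℂ V]

lemma iterate_total_zero (A : DiffAlg V) (n : ℕ) : (fun x => A.total x)^[n] (0:V) = 0 :=
  Function.iterate_fixed (by simp) n

lemma evf_zero (A : DiffAlg V) (G : V) : evf A G 0 = 0 := by
  unfold evf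
  exact finsum_eq_zero_of_forall_eq_zero (fun n => by simp)

lemma total_u (A : DiffAlg V) (n : ℕ) : A.total (A.u n) = A.u (n+1) := by
  rw [A.total_eq, A.dx_u, add_zero]
  rw [finsum_eq_single _ n (fun x hx => by rw [A.pd_u, if_neg hx, mul_zero])]
  rw [A.pd_u, if_pos rfl, mul_one]

lemma iterate_total_u (A : DiffAlg V) (P k : ℕ) :
    (fun x => A.total x)^[k] (A.u P) = A.u (P+k) := by
  induction k with
  | zero => simp
  | succ k ih => rw [Function.iterate_succ_apply', ih, total_u, Nat.add_assoc]

lemma intChoose_zero (k : ℤ) : intChoose k 0 = 1 := by simp [intChoose]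

lemma intChoose_one (k : ℤ) : intChoose k 1 = k := by simp [intChoose]

lemma intChoose_eq_zero {k : ℤ} {n : ℕ} (h0 : 0 ≤ k) (h : k < n) : intChoose k n = 0 := by
  unfold intChoose
  rw [Finset.prod_eq_zero (i := k.toNat) (by simp; omega) (by simp; omega)]
  simp

end DiffAlgAux
namespace DiffAlgAux

variable {V : Type} [CommRing V] [Algebra ℂ V]

lemma mulZ_eval (A : DiffAlg V) (x y : ℤ → V) (X Y : ℤ) (_hX : 0 ≤ X) (_hY : 0 ≤ Y)
    (hx : ∀ k : ℤ, k < 0 ∨ X < k → x k = 0) (hy : ∀ k : ℤ, k < 0 ∨ Y < k → y k = 0) :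
    DiffAlg.mulZ A x y (X + Y - 1) =
      x (X-1) * y Y + x X * y (Y-1) + X • (x X * A.total (y Y)) := by
  unfold DiffAlg.mulZ
  set M : ℤ := X + Y - 1 with hM
  have hiter : ∀ (n : ℕ) (j : ℤ), Y < j → (fun x => A.total x)^[n] (y j) = 0 := by
    intro n j hj
    rw [hy j (Or.inr hj), iterate_total_zero]
  have hsupp : (Function.support fun k : ℤ =>
      ∑ᶠ (n : ℕ), intChoose k n • (x k * (fun x => A.total x)^[n] (y (M - k + n))))
      ⊆ (({X - 1, X} : Finset ℤ) : Set ℤ) := by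
    intro k hk
    simp only [Finset.coe_insert, Finset.coe_singleton, Set.mem_insert_iff,
      Set.mem_singleton_iff]
    by_contra hne
    push_neg at hne
    apply hk
    apply finsum_eq_zero_of_forall_eq_zero
    intro n
    rcases lt_or_ge k 0 with h | h
    · rw [hx k (Or.inl h), zero_mul, smul_zero]
    rcases lt_or_ge X k with h2 | h2
    · rw [hx k (Or.inr h2), zero_mul, smul_zero]
    · have : Y < M - k + n := by omega
      rw [hiter n _ this, mul_zero, smul_zero]
  rw [finsum_eq_sum_of_support_subset _ hsupp]
  rw [Finset.sum_pair (by omega : X - 1 ≠ X)]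
  have h1 : (∑ᶠ (n : ℕ), intChoose (X-1) n •
      (x (X-1) * (fun x => A.total x)^[n] (y (M - (X-1) + n)))) = x (X-1) * y Y := by
    rw [finsum_eq_single _ 0 (fun n hn => by
      rw [hiter n _ (by omega), mul_zero, smul_zero])]
    have : M - (X - 1) + (0:ℕ) = Y := by push_cast; omega
    rw [this, intChoose_zero, one_smul, Function.iterate_zero_apply]
  have h2 : (∑ᶠ (n : ℕ), intChoose X n •
      (x X * (fun x => A.total x)^[n] (y (M - X + n)))) =
      x X * y (Y-1) + X • (x X * A.total (y Y)) := by
    have hs2 : (Function.support fun n : ℕ => intChoose X n •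
        (x X * (fun x => A.total x)^[n] (y (M - X + n))))
        ⊆ (({0, 1} : Finset ℕ) : Set ℕ) := by
      intro n hn
      simp only [Finset.coe_insert, Finset.coe_singleton, Set.mem_insert_iff,
        Set.mem_singleton_iff]
      by_contra hne
      push_neg at hne
      apply hn
      dsimp only
      rw [hiter n _ (by omega), mul_zero, smul_zero]
    rw [finsum_eq_sum_of_support_subset _ hs2,
      Finset.sum_pair (by omega : (0:ℕ) ≠ 1)]
    have e0 : M - X + (0:ℕ) = Y - 1 := by push_cast; omega
    have e1 : M - X + (1:ℕ) = Y := by push_cast; omega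
    rw [e0, e1, intChoose_zero, one_smul, Function.iterate_zero_apply,
      intChoose_one, Function.iterate_one]
  rw [h1, h2, add_assoc]

end DiffAlgAux
namespace DiffAlgAux

variable {V : Type} [CommRing V] [Algebra ℂ V]

lemma total_ne_zero (A : DiffAlg V) (f : V) (r : ℕ) (h : A.pd r f ≠ 0) :
    A.total f ≠ 0 := by
  have hne : r ∈ (A.pdFin f).toFinset := by simpa using h
  set s := (A.pdFin f).toFinset.max' ⟨r, hne⟩ with hs
  have hsmem : s ∈ (A.pdFin f).toFinset := Finset.max'_mem _ _
  have hsne : A.pd s f ≠ 0 := by simpa using hsmem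
  have hgt : ∀ j, s < j → A.pd j f = 0 := by
    intro j hj
    by_contra hj0
    have : j ∈ (A.pdFin f).toFinset := by simpa using hj0
    exact absurd (Finset.le_max' _ j this) (by omega)
  intro h0
  apply hsne
  have h1 : A.pd (s+1) (A.total f) = A.pd s f := by
    rw [A.total_eq, map_add]
    have hsup : (Function.support fun n => A.u (n + 1) * A.pd n f)
        ⊆ ((A.pdFin f).toFinset : Set ℕ) := by
      intro n hn
      simp only [Set.Finite.coe_toFinset, Set.mem_setOf_eq]
      intro hz
      exact hn (by simp [hz])
    rw [finsum_eq_sum_of_support_subset _ hsup, map_sum, A.pd_dx,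
      hgt (s+1) (by omega), map_zero, add_zero]
    rw [Finset.sum_eq_single s]
    · rw [Derivation.leibniz, smul_eq_mul, smul_eq_mul,
        A.pd_comm, hgt (s+1) (by omega), map_zero, mul_zero, zero_add,
        A.pd_u, if_pos rfl, mul_one]
    · intro n _ hns
      rw [Derivation.leibniz, smul_eq_mul, smul_eq_mul,
        A.pd_comm, hgt (s+1) (by omega), map_zero, mul_zero, zero_add,
        A.pd_u, if_neg (by omega), mul_zero]
    · intro hnot
      exact absurd hsmem hnot
  rw [← h1, h0, map_zero]

lemma dafC_u (A : DiffAlg V) (a : ℕ → V) (N : ℕ) (hdeg : ∀ k, N < k → a k = 0)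
    (P j : ℕ) :
    DiffAlg.dafC A a (A.u P) j
      = ∑ k ∈ Finset.range (N+1), A.u (P+k) * A.pd j (a k) := by
  unfold DiffAlg.dafC
  have hsup : (Function.support fun k =>
      (fun x => A.total x)^[k] (A.u P) * A.pd j (a k))
      ⊆ ((Finset.range (N+1) : Finset ℕ) : Set ℕ) := by
    intro k hk
    simp only [Finset.coe_range, Set.mem_Iio]
    by_contra hkN
    apply hk
    dsimp only
    rw [hdeg k (by omega), map_zero, mul_zero]
  rw [finsum_eq_sum_of_support_subset _ hsup]
  exact Finset.sum_congr rfl fun k _ => by rw [iterate_total_u]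

end DiffAlgAux
/-- if `A = Σ_{k ≤ N} a_k ∂^k` is a hereditary differential operator of
degree `N` over `V`, then the differential order of each coefficient `a_k` is at most
`N + 1`. -/
theorem hereditary_coefficient_order {V : Type} [CommRing V] [Algebra ℂ V] [IsDomain V]
    (A : DiffAlg V) (a : ℕ → V) (N : ℕ)
    (hlead : a N ≠ 0) (hdeg : ∀ k, N < k → a k = 0)
    (her : DiffAlg.IsHereditary A a) :
    ∀ k m : ℕ, N + 1 < m → A.pd m (a k) = 0 := by
  classical
  haveI : CharZero V := charZero_of_injective_algebraMap (algebraMap ℂ V).injective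
  intro k0 m0 hm0
  by_contra hne
  have hk0N : k0 ≤ N := by
    by_contra h
    push_neg at h
    exact hne (by rw [hdeg k0 h, map_zero])
  set T : Finset ℕ := (Finset.range (N+1)).biUnion (fun k => (A.pdFin (a k)).toFinset)
    with hT
  have hmemT : m0 ∈ T := by
    simp only [hT, Finset.mem_biUnion, Finset.mem_range, Set.Finite.mem_toFinset,
      Set.mem_setOf_eq]
    exact ⟨k0, by omega, hne⟩
  set m : ℕ := T.max' ⟨m0, hmemT⟩ with hm
  have hmN : N + 1 < m := lt_of_lt_of_le hm0 (Finset.le_max' T m0 hmemT)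
  have hmtop : ∀ j, m < j → ∀ k, A.pd j (a k) = 0 := by
    intro j hj k
    rcases le_or_gt k N with hk | hk
    · by_contra hz
      have hjT : j ∈ T := by
        simp only [hT, Finset.mem_biUnion, Finset.mem_range, Set.Finite.mem_toFinset,
          Set.mem_setOf_eq]
        exact ⟨k, by omega, hz⟩
      exact absurd (Finset.le_max' T j hjT) (by omega)
    · rw [hdeg k hk, map_zero]
  have hmex : ∃ k, k ≤ N ∧ A.pd m (a k) ≠ 0 := by
    have hmm := Finset.max'_mem T ⟨m0, hmemT⟩
    rw [← hm] at hmm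
    simp only [hT, Finset.mem_biUnion, Finset.mem_range, Set.Finite.mem_toFinset,
      Set.mem_setOf_eq] at hmm
    obtain ⟨k, hk, hz⟩ := hmm
    exact ⟨k, by omega, hz⟩
  set c : ℕ → V := fun k => A.pd m (a k) with hc
  set U : Finset ℕ := (A.pdFin (a N)).toFinset ∪ (A.pdFin (A.total (a N))).toFinset ∪
    (Finset.range (N+1)).biUnion
      (fun k => (A.pdFin (c k)).toFinset ∪ (A.pdFin (A.total (c k))).toFinset) with hU
  set P : ℕ := U.sup id + 1 with hPdef
  have hnotU : ∀ q, P ≤ q → q ∉ U := by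
    intro q hq hmem
    have := Finset.le_sup (f := id) hmem
    simp only [id] at this
    omega
  have hPaN : ∀ q, P ≤ q → A.pd q (a N) = 0 := by
    intro q hq; by_contra hz
    exact hnotU q hq (by
      simp only [hU, Finset.mem_union, Set.Finite.mem_toFinset, Set.mem_setOf_eq]
      exact Or.inl (Or.inl hz))
  have hPtaN : ∀ q, P ≤ q → A.pd q (A.total (a N)) = 0 := by
    intro q hq; by_contra hz
    exact hnotU q hq (by
      simp only [hU, Finset.mem_union, Set.Finite.mem_toFinset, Set.mem_setOf_eq]
      exact Or.inl (Or.inr hz))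
  have hPc : ∀ q, P ≤ q → ∀ k, k ≤ N → A.pd q (c k) = 0 := by
    intro q hq k hk; by_contra hz
    exact hnotU q hq (by
      simp only [hU, Finset.mem_union, Finset.mem_biUnion, Finset.mem_range,
        Set.Finite.mem_toFinset, Set.mem_setOf_eq]
      exact Or.inr ⟨k, by omega, Or.inl hz⟩)
  have hPtc : ∀ q, P ≤ q → ∀ k, k ≤ N → A.pd q (A.total (c k)) = 0 := by
    intro q hq k hk; by_contra hz
    exact hnotU q hq (by
      simp only [hU, Finset.mem_union, Finset.mem_biUnion, Finset.mem_range,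
        Set.Finite.mem_toFinset, Set.mem_setOf_eq]
      exact Or.inr ⟨k, by omega, Or.inr hz⟩)
  set b : ℕ → V := DiffAlg.dafC A a (A.u P) with hb
  have hbsum : ∀ j, b j = ∑ k ∈ Finset.range (N+1), A.u (P+k) * A.pd j (a k) :=
    fun j => DiffAlgAux.dafC_u A a N hdeg P j
  have locpos : ∀ (f : ℕ → V) (j : ℤ), 0 ≤ j → DiffAlg.loc f j = f j.toNat := by
    intro f j hj; simp only [DiffAlg.loc]; rw [if_pos hj]
  have locneg : ∀ (f : ℕ → V) (j : ℤ), j < 0 → DiffAlg.loc f j = 0 := by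
    intro f j hj; simp only [DiffAlg.loc]; rw [if_neg (by omega)]
  have hbtop : ∀ j : ℤ, j < 0 ∨ (m:ℤ) < j → DiffAlg.loc b j = 0 := by
    intro j hj
    rcases hj with hj | hj
    · exact locneg b j hj
    · rw [locpos b j (by omega), hbsum]
      apply Finset.sum_eq_zero
      intro k _
      rw [hmtop j.toNat (by omega) k, mul_zero]
  have haloc : ∀ j : ℤ, j < 0 ∨ (N:ℤ) < j → DiffAlg.loc a j = 0 := by
    intro j hj
    rcases hj with hj | hj
    · exact locneg a j hj
    · rw [locpos a j (by omega)]
      exact hdeg j.toNat (by omega)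
  set g : ℕ → V := fun j => DiffAlg.evf A (A.u P) (a j) with hg
  have hgloc : ∀ j : ℤ, j < 0 ∨ (m:ℤ) < j → DiffAlg.loc g j = 0 := by
    intro j hj
    rcases hj with hj | hj
    · exact locneg g j hj
    · rw [locpos g j (by omega)]
      show DiffAlg.evf A (A.u P) (a j.toNat) = 0
      rw [hdeg j.toNat (by omega), DiffAlgAux.evf_zero]
  have key := her (A.u P) ((N:ℤ) + m - 1)
  have hL1 : DiffAlg.loc (fun j => DiffAlg.evf A (DiffAlg.opApp A a (A.u P)) (a j))
      ((N:ℤ) + m - 1) = 0 := by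
    rw [locpos _ _ (by omega)]
    show DiffAlg.evf A _ (a ((N:ℤ) + m - 1).toNat) = 0
    rw [hdeg _ (by omega), DiffAlgAux.evf_zero]
  have E1 : DiffAlg.mulZ A (DiffAlg.loc b) (DiffAlg.loc a) ((N:ℤ) + m - 1)
      = DiffAlg.loc b ((m:ℤ)-1) * DiffAlg.loc a (N:ℤ)
        + DiffAlg.loc b (m:ℤ) * DiffAlg.loc a ((N:ℤ)-1)
        + (m:ℤ) • (DiffAlg.loc b (m:ℤ) * A.total (DiffAlg.loc a (N:ℤ))) := by
    rw [show ((N:ℤ) + m - 1) = (m:ℤ) + (N:ℤ) - 1 by ring]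
    exact DiffAlgAux.mulZ_eval A _ _ (m:ℤ) (N:ℤ) (Int.natCast_nonneg _) (Int.natCast_nonneg _)
      hbtop haloc
  have E2 : DiffAlg.mulZ A (DiffAlg.loc a) (DiffAlg.loc b) ((N:ℤ) + m - 1)
      = DiffAlg.loc a ((N:ℤ)-1) * DiffAlg.loc b (m:ℤ)
        + DiffAlg.loc a (N:ℤ) * DiffAlg.loc b ((m:ℤ)-1)
        + (N:ℤ) • (DiffAlg.loc a (N:ℤ) * A.total (DiffAlg.loc b (m:ℤ))) :=
    DiffAlgAux.mulZ_eval A _ _ (N:ℤ) (m:ℤ) (Int.natCast_nonneg _) (Int.natCast_nonneg _)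
      haloc (fun j hj => hbtop j (by omega))
  have E3 : DiffAlg.mulZ A (DiffAlg.loc a) (DiffAlg.loc g) ((N:ℤ) + m - 1) = 0 := by
    rw [DiffAlgAux.mulZ_eval A _ _ (N:ℤ) (m:ℤ) (Int.natCast_nonneg _) (Int.natCast_nonneg _)
      haloc (fun j hj => hgloc j (by omega))]
    have z1 : DiffAlg.loc g (m:ℤ) = 0 := by
      rw [locpos g _ (by omega)]
      show DiffAlg.evf A (A.u P) (a ((m:ℤ)).toNat) = 0
      rw [hdeg _ (by omega), DiffAlgAux.evf_zero]
    have z2 : DiffAlg.loc g ((m:ℤ)-1) = 0 := by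
      rw [locpos g _ (by omega)]
      show DiffAlg.evf A (A.u P) (a ((m:ℤ)-1).toNat) = 0
      rw [hdeg _ (by omega), DiffAlgAux.evf_zero]
    rw [z1, z2]
    simp
  rw [hL1, E1, E2, E3] at key
  have lbm : DiffAlg.loc b (m:ℤ) = b m := by
    rw [locpos b _ (by omega)]; norm_num
  have laN : DiffAlg.loc a (N:ℤ) = a N := by
    rw [locpos a _ (by omega)]; norm_num
  rw [lbm, laN] at key
  simp only [zsmul_eq_mul] at key
  have Ekey : ((m:ℕ):V) * (b m * A.total (a N)) = ((N:ℕ):V) * (a N * A.total (b m)) := by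
    push_cast at key ⊢
    linear_combination -key
  have hpdB : ∀ q, P ≤ q →
      A.pd q (b m) = ∑ j ∈ Finset.range (N+1), (if q = P + j then c j else 0) := by
    intro q hq
    rw [hbsum, map_sum]
    apply Finset.sum_congr rfl
    intro j hj
    rw [Derivation.leibniz, smul_eq_mul, smul_eq_mul,
      hPc q hq j (by simp at hj; omega), mul_zero, zero_add, A.pd_u]
    split <;> simp [hc]
  have hpdTB : ∀ q, P ≤ q →
      A.pd q (A.total (b m)) = ∑ j ∈ Finset.range (N+1),
        ((if q = P + j + 1 then c j else 0) + (if q = P + j then A.total (c j) else 0)) := by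
    intro q hq
    rw [hbsum, map_sum, map_sum]
    apply Finset.sum_congr rfl
    intro j hj
    have hjN : j ≤ N := by simp at hj; omega
    rw [Derivation.leibniz, smul_eq_mul, smul_eq_mul, DiffAlgAux.total_u, map_add,
      Derivation.leibniz, Derivation.leibniz, smul_eq_mul, smul_eq_mul,
      smul_eq_mul, smul_eq_mul, hPtc q hq j hjN, hPc q hq j hjN,
      A.pd_u, A.pd_u]
    simp only [hc]
    split_ifs <;> ring
  rcases Nat.eq_zero_or_pos N with hN0 | hNpos
  · subst hN0
    obtain ⟨k1, hk1, hck1⟩ := hmex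
    have hk10 : k1 = 0 := by omega
    subst hk10
    have hA' : A.total (a 0) ≠ 0 := DiffAlgAux.total_ne_zero A (a 0) m hck1
    have hB0 : b m * A.total (a 0) = 0 := by
      have hm0' : ((m:ℕ):V) ≠ 0 := Nat.cast_ne_zero.mpr (by omega)
      rw [Nat.cast_zero, zero_mul] at Ekey
      exact (mul_eq_zero.mp Ekey).resolve_left hm0'
    have hBz : b m = 0 := (mul_eq_zero.mp hB0).resolve_right hA'
    have hfin := hpdB P le_rfl
    rw [hBz, map_zero] at hfin
    simp at hfin
    exact hck1 hfin.symm
  · have hstep : ∀ k, k ≤ N → (∀ j, k < j → c j = 0) → c k = 0 := by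
      intro k hk hjk
      have hqP : P ≤ P + k + 1 := by omega
      have h1 : A.pd (P + k + 1) (b m) = 0 := by
        rw [hpdB _ hqP]
        apply Finset.sum_eq_zero
        intro j hj
        split
        · exact hjk j (by omega)
        · rfl
      have h2 : A.pd (P + k + 1) (A.total (b m)) = c k := by
        rw [hpdTB _ hqP, Finset.sum_add_distrib]
        have hA : ∑ j ∈ Finset.range (N+1), (if P + k + 1 = P + j + 1 then c j else 0)
            = c k := by
          rw [Finset.sum_eq_single k]
          · rw [if_pos rfl]
          · intro j _ hjne
            rw [if_neg (by omega)]
          · intro hnk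
            exact absurd (Finset.mem_range.mpr (by omega)) hnk
        have hB2 : ∑ j ∈ Finset.range (N+1), (if P + k + 1 = P + j then A.total (c j) else 0)
            = 0 := by
          apply Finset.sum_eq_zero
          intro j hj
          split
          · rw [hjk j (by omega), map_zero]
          · rfl
        rw [hA, hB2, add_zero]
      have hL : A.pd (P + k + 1) (((m:ℕ):V) * (b m * A.total (a N))) = 0 := by
        rw [Derivation.leibniz, Derivation.leibniz, smul_eq_mul, smul_eq_mul,
          smul_eq_mul, smul_eq_mul, h1, hPtaN _ hqP, Derivation.map_natCast]
        ring
      have hR : A.pd (P + k + 1) (((N:ℕ):V) * (a N * A.total (b m)))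
          = (N:V) * (a N * c k) := by
        rw [Derivation.leibniz, Derivation.leibniz, smul_eq_mul, smul_eq_mul,
          smul_eq_mul, smul_eq_mul, h2, hPaN _ hqP, Derivation.map_natCast]
        ring
      have h0 : (N:V) * (a N * c k) = 0 := by
        rw [← hR, ← congrArg (A.pd (P + k + 1)) Ekey, hL]
      have hNne : ((N:ℕ):V) ≠ 0 := Nat.cast_ne_zero.mpr (by omega)
      have := ((mul_eq_zero.mp h0).resolve_left hNne)
      exact (mul_eq_zero.mp this).resolve_left hlead
    have hall : ∀ d : ℕ, c (N - d) = 0 := by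
      intro d
      induction d using Nat.strong_induction_on with
      | _ d ih =>
        apply hstep (N - d) (by omega)
        intro j hj
        rcases le_or_gt j N with hjN | hjN
        · have hjd : j = N - (N - j) := by omega
          rw [hjd]
          exact ih (N - j) (by omega)
        · show A.pd m (a j) = 0
          rw [hdeg j hjN, map_zero]
    obtain ⟨k1, hk1, hck1⟩ := hmex
    have hc1 : c k1 = 0 := by
      have := hall (N - k1)
      rwa [show N - (N - k1) = k1 by omega] at this
    exact hck1 hc1
end

section
/- Let A be a hereditary differential operator on V and F ∈ V a function for which A is a recursion operator (i.e. X_F(A) = [D_F, A]). Then the functions A^n(F), n ≥ 0, pairwise commute: {A^n(F), A^m(F)} = 0 for all n, m ≥ 0. -/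
namespace DiffAlg

open Finset Function

variable {V : Type} [CommRing V] [Algebra ℂ V]

/-- Abbreviation for the iterated total derivative. -/
noncomputable def Tk (A : DiffAlg V) (k : ℕ) (f : V) : V := (fun x => A.total x)^[k] f

lemma Tk_zero (A : DiffAlg V) (f : V) : A.Tk 0 f = f := rfl

lemma Tk_succ (A : DiffAlg V) (k : ℕ) (f : V) : A.Tk (k+1) f = A.Tk k (A.total f) := by
  simp [Tk, Function.iterate_succ_apply]

lemma Tk_succ' (A : DiffAlg V) (k : ℕ) (f : V) : A.Tk (k+1) f = A.total (A.Tk k f) := by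
  simp [Tk, Function.iterate_succ_apply']

lemma Tk_add_app (A : DiffAlg V) (j k : ℕ) (f : V) :
    A.Tk (j + k) f = A.Tk j (A.Tk k f) := by
  simp [Tk, Function.iterate_add_apply]

lemma Tk_addzero (A : DiffAlg V) (k : ℕ) : A.Tk k (0:V) = 0 := by
  induction k with
  | zero => rfl
  | succ k ih => rw [Tk_succ', ih]; exact map_zero A.total

lemma Tk_add (A : DiffAlg V) (k : ℕ) (f g : V) : A.Tk k (f + g) = A.Tk k f + A.Tk k g := by
  induction k with
  | zero => rfl
  | succ k ih => rw [Tk_succ', Tk_succ', Tk_succ', ih]; exact map_add A.total _ _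

/-- `Tk` as an additive monoid hom. -/
noncomputable def tkHom (A : DiffAlg V) (k : ℕ) : V →+ V where
  toFun := A.Tk k
  map_zero' := A.Tk_addzero k
  map_add' := A.Tk_add k

lemma Tk_sub (A : DiffAlg V) (k : ℕ) (f g : V) : A.Tk k (f - g) = A.Tk k f - A.Tk k g :=
  (A.tkHom k).map_sub f g

lemma Tk_sum (A : DiffAlg V) (k : ℕ) {ι : Type*} (s : Finset ι) (f : ι → V) :
    A.Tk k (∑ i ∈ s, f i) = ∑ i ∈ s, A.Tk k (f i) :=
  map_sum (A.tkHom k) f s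

lemma total_mul (A : DiffAlg V) (f g : V) :
    A.total (f * g) = A.total f * g + f * A.total g := by
  rw [A.total.leibniz]; simp [smul_eq_mul]; ring

/-- helper: bound for a finite subset of ℕ -/
lemma exists_bound {s : Set ℕ} (h : s.Finite) : ∃ N, ∀ n, n ∈ s → n < N := by
  obtain ⟨N, hN⟩ := h.toFinset.exists_nat_subset_range
  exact ⟨N, fun n hn => Finset.mem_range.mp (hN (h.mem_toFinset.mpr hn))⟩

lemma finsum_eq_sum_range {f : ℕ → V} {N : ℕ} (h : ∀ n, N ≤ n → f n = 0) :
    ∑ᶠ n, f n = ∑ n ∈ Finset.range N, f n := by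
  apply finsum_eq_sum_of_support_subset
  intro n hn
  simp only [Function.mem_support] at hn
  simp only [Finset.coe_range, Set.mem_Iio]
  by_contra hc
  exact hn (h n (le_of_not_gt hc))

lemma pdFin' (A : DiffAlg V) (f : V) : (Function.support fun n => A.pd n f).Finite :=
  A.pdFin f

/-- the "downshift" of the partial derivatives -/
noncomputable def pdown (A : DiffAlg V) : ℕ → V → V
  | 0, _ => 0
  | (j+1), f => A.pd j f

lemma pd_total (A : DiffAlg V) (j : ℕ) (f : V) :
    A.pd j (A.total f) = A.total (A.pd j f) + A.pdown j f := by
  have hsupp : (Function.support fun n => A.u (n+1) * A.pd n f).Finite := by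
    apply (A.pdFin f).subset
    intro n hn
    simp only [Function.mem_support] at hn
    intro h0
    exact hn (by rw [h0, mul_zero])
  have e1 : A.pd j (A.total f)
      = ∑ᶠ n, A.pd j (A.u (n+1) * A.pd n f) + A.pd j (A.dx f) := by
    rw [A.total_eq f, map_add]
    congr 1
    exact ((A.pd j).toLinearMap.toAddMonoidHom.map_finsum hsupp)
  rw [e1]
  have e2 : ∀ n, A.pd j (A.u (n+1) * A.pd n f)
      = (if j = n+1 then 1 else 0) * A.pd n f + A.u (n+1) * A.pd n (A.pd j f) := by
    intro n
    rw [(A.pd j).leibniz]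
    simp only [smul_eq_mul]
    rw [A.pd_u j (n+1), A.pd_comm j n f]
    ring
  rw [finsum_congr e2]
  have hs1 : (Function.support fun n => (if j = n+1 then (1:V) else 0) * A.pd n f).Finite := by
    apply (A.pdFin f).subset
    intro n hn
    simp only [Function.mem_support] at hn
    intro h0; exact hn (by rw [h0, mul_zero])
  have hs2 : (Function.support fun n => A.u (n+1) * A.pd n (A.pd j f)).Finite := by
    apply (A.pdFin (A.pd j f)).subset
    intro n hn
    simp only [Function.mem_support] at hn
    intro h0; exact hn (by rw [h0, mul_zero])
  rw [finsum_add_distrib hs1 hs2]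
  have e3 : ∑ᶠ n, (if j = n+1 then (1:V) else 0) * A.pd n f = A.pdown j f := by
    cases j with
    | zero =>
      rw [finsum_eq_zero_of_forall_eq_zero]
      · rfl
      · intro n; simp
    | succ j' =>
      rw [finsum_eq_single _ j']
      · simp [pdown]
      · intro n hn
        have : ¬ (j' + 1 = n + 1) := by omega
        simp [this]; intro h; exact absurd h.symm hn
  rw [e3, A.pd_dx j f]
  have e4 : A.total (A.pd j f)
      = (∑ᶠ n, A.u (n+1) * A.pd n (A.pd j f)) + A.dx (A.pd j f) := A.total_eq _
  rw [e4]
  ring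


/-- Pascal-style reindexing identity used for Leibniz rules. -/
lemma choose_shift (w : ℕ → ℕ → V) (k : ℕ) :
    ∑ i ∈ Finset.range (k+1), (k.choose i) • (w (i+1) (k-i) + w i (k-i+1))
      = ∑ i ∈ Finset.range (k+2), ((k+1).choose i) • w i (k+1-i) := by
  have hsplit : ∑ i ∈ Finset.range (k+1), (k.choose i) • (w (i+1) (k-i) + w i (k-i+1))
      = (∑ i ∈ Finset.range (k+1), (k.choose i) • w (i+1) (k-i))
        + ∑ i ∈ Finset.range (k+1), (k.choose i) • w i (k+1-i) := by
    rw [← Finset.sum_add_distrib]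
    apply Finset.sum_congr rfl
    intro i hi
    have hik : k - i + 1 = k + 1 - i := by
      have := Finset.mem_range.mp hi
      omega
    rw [smul_add, hik]
  rw [hsplit]
  -- RHS: peel off i = 0, and use Pascal on the rest
  have hR : ∑ i ∈ Finset.range (k+2), ((k+1).choose i) • w i (k+1-i)
      = w 0 (k+1) + ∑ i ∈ Finset.range (k+1),
          ((k.choose i) • w (i+1) (k-i) + (k.choose (i+1)) • w (i+1) (k-i)) := by
    rw [Finset.sum_range_succ' (fun i => ((k+1).choose i) • w i (k+1-i)) (k+1)]
    rw [add_comm]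
    congr 1
    · simp
    · apply Finset.sum_congr rfl
      intro i hi
      have h1 : (k+1).choose (i+1) = k.choose i + k.choose (i+1) := Nat.choose_succ_succ' k i
      have h2 : k + 1 - (i+1) = k - i := by omega
      rw [h1, h2, add_smul]
  rw [hR]
  -- LHS second sum: peel off i = 0
  have hL : ∑ i ∈ Finset.range (k+1), (k.choose i) • w i (k+1-i)
      = w 0 (k+1) + ∑ i ∈ Finset.range k, (k.choose (i+1)) • w (i+1) (k-i) := by
    rw [Finset.sum_range_succ' (fun i => (k.choose i) • w i (k+1-i)) k]
    rw [add_comm]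
    congr 1
    · simp
    · apply Finset.sum_congr rfl
      intro i hi
      congr 2
      omega
  rw [hL]
  have hext : ∑ i ∈ Finset.range k, (k.choose (i+1)) • w (i+1) (k-i)
      = ∑ i ∈ Finset.range (k+1), (k.choose (i+1)) • w (i+1) (k-i) := by
    rw [Finset.sum_range_succ]
    simp [Nat.choose_succ_self]
  rw [hext, Finset.sum_add_distrib]
  ring

/-- Leibniz rule for the iterated total derivative. -/
lemma Tk_mul (A : DiffAlg V) (k : ℕ) (f g : V) :
    A.Tk k (f * g) = ∑ i ∈ Finset.range (k+1), (k.choose i) • (A.Tk i f * A.Tk (k-i) g) := by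
  induction k with
  | zero => simp [Tk_zero]
  | succ k ih =>
    rw [Tk_succ', ih, map_sum]
    have e1 : ∀ i ∈ Finset.range (k+1),
        A.total ((k.choose i) • (A.Tk i f * A.Tk (k-i) g))
          = (k.choose i) • ((A.Tk (i+1) f * A.Tk (k-i) g) + A.Tk i f * A.Tk (k-i+1) g) := by
      intro i hi
      rw [map_nsmul]
      congr 1
      rw [A.total_mul, Tk_succ', Tk_succ']
    rw [Finset.sum_congr rfl e1]
    exact choose_shift (fun i j => A.Tk i f * A.Tk j g) k

/-- truncated lower partial derivative -/
noncomputable def pdI (A : DiffAlg V) (m i : ℕ) (f : V) : V :=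
  if i ≤ m then A.pd (m - i) f else 0

lemma pd_Tk (A : DiffAlg V) (m k : ℕ) (f : V) :
    A.pd m (A.Tk k f)
      = ∑ i ∈ Finset.range (k+1), (k.choose i) • A.Tk (k-i) (A.pdI m i f) := by
  induction k generalizing m with
  | zero => simp [Tk_zero, pdI]
  | succ k ih =>
    rw [Tk_succ', pd_total, ih, map_sum]
    have e1 : ∀ i ∈ Finset.range (k+1),
        A.total ((k.choose i) • A.Tk (k-i) (A.pdI m i f))
          = (k.choose i) • A.Tk (k-i+1) (A.pdI m i f) := by
      intro i hi
      rw [map_nsmul, ← Tk_succ']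
    rw [Finset.sum_congr rfl e1]
    have e2 : A.pdown m (A.Tk k f)
        = ∑ i ∈ Finset.range (k+1), (k.choose i) • A.Tk (k-i) (A.pdI m (i+1) f) := by
      cases m with
      | zero =>
        have : ∀ i ∈ Finset.range (k+1), (k.choose i) • A.Tk (k-i) (A.pdI 0 (i+1) f) = 0 := by
          intro i hi
          have : A.pdI 0 (i+1) f = 0 := by simp [pdI]
          rw [this, Tk_addzero, smul_zero]
        rw [Finset.sum_congr rfl this, Finset.sum_const_zero]
        rfl
      | succ m' =>
        show A.pd m' (A.Tk k f) = _
        rw [ih m']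
        apply Finset.sum_congr rfl
        intro i hi
        congr 1
        unfold pdI
        by_cases him : i ≤ m'
        · rw [if_pos him, if_pos (by omega)]
          have : m' - i = m' + 1 - (i + 1) := by omega
          rw [this]
        · rw [if_neg him, if_neg (by omega)]
    rw [e2, ← Finset.sum_add_distrib]
    have e3 : ∀ i ∈ Finset.range (k+1),
        (k.choose i) • A.Tk (k-i+1) (A.pdI m i f) + (k.choose i) • A.Tk (k-i) (A.pdI m (i+1) f)
          = (k.choose i) • ((fun i' j => A.Tk j (A.pdI m i' f)) (i+1) (k-i)
              + (fun i' j => A.Tk j (A.pdI m i' f)) i (k-i+1)) := by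
      intro i hi
      rw [smul_add]
      simp only []
      ring
    rw [Finset.sum_congr rfl e3, choose_shift (fun i' j => A.Tk j (A.pdI m i' f)) k]
lemma evf_def (A : DiffAlg V) (P f : V) : evf A P f = ∑ᶠ n, A.Tk n P * A.pd n f := rfl

lemma fin_mul_pd (A : DiffAlg V) (c : ℕ → V) (f : V) :
    (Function.support fun n => c n * A.pd n f).Finite := by
  apply (A.pdFin f).subset
  intro n hn
  simp only [Function.mem_support] at hn ⊢
  intro h0
  exact hn (by rw [h0, mul_zero])

lemma evf_zero (A : DiffAlg V) (P : V) : evf A P 0 = 0 := by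
  rw [evf_def, finsum_eq_zero_of_forall_eq_zero]
  intro n
  rw [map_zero, mul_zero]

lemma evf_add (A : DiffAlg V) (P f g : V) : evf A P (f + g) = evf A P f + evf A P g := by
  rw [evf_def, evf_def, evf_def, ← finsum_add_distrib (A.fin_mul_pd _ f) (A.fin_mul_pd _ g)]
  apply finsum_congr
  intro n
  rw [map_add, mul_add]

/-- `evf A P` as an additive monoid hom. -/
noncomputable def evfHom (A : DiffAlg V) (P : V) : V →+ V where
  toFun := evf A P
  map_zero' := evf_zero A P
  map_add' := evf_add A P

lemma evf_sub (A : DiffAlg V) (P f g : V) : evf A P (f - g) = evf A P f - evf A P g :=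
  (A.evfHom P).map_sub f g

lemma total_evf (A : DiffAlg V) (P f : V) :
    A.total (evf A P f) = evf A P (A.total f) := by
  obtain ⟨N, hN⟩ := exists_bound ((A.pdFin f).union (A.pdFin (A.total f)))
  have hf : ∀ n, N ≤ n → A.pd n f = 0 := by
    intro n hn
    by_contra hc
    exact absurd (hN n (Set.mem_union_left _ hc)) (by omega)
  have hft : ∀ n, N ≤ n → A.pd n (A.total f) = 0 := by
    intro n hn
    by_contra hc
    exact absurd (hN n (Set.mem_union_right _ hc)) (by omega)
  have e1 : evf A P f = ∑ n ∈ Finset.range (N+1), A.Tk n P * A.pd n f := by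
    rw [evf_def]
    exact finsum_eq_sum_range (fun n hn => by rw [hf n (by omega), mul_zero])
  have e2 : evf A P (A.total f)
      = ∑ n ∈ Finset.range (N+1), A.Tk n P * A.pd n (A.total f) := by
    rw [evf_def]
    exact finsum_eq_sum_range (fun n hn => by rw [hft n (by omega), mul_zero])
  rw [e1, e2, map_sum]
  have e3 : ∀ n ∈ Finset.range (N+1), A.total (A.Tk n P * A.pd n f)
      = A.Tk (n+1) P * A.pd n f + A.Tk n P * A.total (A.pd n f) := by
    intro n _
    rw [A.total_mul, Tk_succ']
  rw [Finset.sum_congr rfl e3, Finset.sum_add_distrib]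
  have e4 : ∀ n ∈ Finset.range (N+1), A.Tk n P * A.pd n (A.total f)
      = A.Tk n P * A.total (A.pd n f) + A.Tk n P * A.pdown n f := by
    intro n _
    rw [A.pd_total, mul_add]
  rw [Finset.sum_congr rfl e4, Finset.sum_add_distrib]
  have e5 : ∑ n ∈ Finset.range (N+1), A.Tk n P * A.pdown n f
      = ∑ n ∈ Finset.range (N+1), A.Tk (n+1) P * A.pd n f := by
    rw [Finset.sum_range_succ' (fun n => A.Tk n P * A.pdown n f) N]
    rw [Finset.sum_range_succ (fun n => A.Tk (n+1) P * A.pd n f) N]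
    rw [hf N (le_refl N), mul_zero, add_zero]
    have : A.pdown 0 f = 0 := rfl
    rw [this, mul_zero, add_zero]
    rfl
  rw [e5]
  ring
lemma Tk_evf (A : DiffAlg V) (k : ℕ) (P f : V) :
    A.Tk k (evf A P f) = evf A P (A.Tk k f) := by
  induction k with
  | zero => rfl
  | succ k ih => rw [Tk_succ', Tk_succ', ih, total_evf]

lemma evf_mul (A : DiffAlg V) (P f g : V) :
    evf A P (f * g) = evf A P f * g + f * evf A P g := by
  rw [evf_def]
  have e1 : ∀ n, A.Tk n P * A.pd n (f * g)
      = A.Tk n P * A.pd n f * g + f * (A.Tk n P * A.pd n g) := by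
    intro n
    rw [(A.pd n).leibniz]
    simp only [smul_eq_mul]
    ring
  rw [finsum_congr e1]
  have h1 : (Function.support fun n => A.Tk n P * A.pd n f * g).Finite := by
    apply (A.pdFin f).subset
    intro n hn
    simp only [Function.mem_support] at hn ⊢
    intro h0
    exact hn (by rw [h0, mul_zero, zero_mul])
  have h2 : (Function.support fun n => f * (A.Tk n P * A.pd n g)).Finite := by
    apply (A.pdFin g).subset
    intro n hn
    simp only [Function.mem_support] at hn ⊢
    intro h0
    exact hn (by rw [h0, mul_zero, mul_zero])
  rw [finsum_add_distrib h1 h2]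
  congr 1
  · rw [evf_def, ← finsum_mul']
    exact A.fin_mul_pd _ f
  · rw [evf_def, ← mul_finsum']
    exact A.fin_mul_pd _ g

lemma opApp_def (A : DiffAlg V) (c : ℕ → V) (g : V) :
    opApp A c g = ∑ᶠ k, c k * A.Tk k g := rfl

lemma opApp_eq_sum (A : DiffAlg V) {c : ℕ → V} {N : ℕ} (hc : ∀ k, N ≤ k → c k = 0) (g : V) :
    opApp A c g = ∑ k ∈ Finset.range N, c k * A.Tk k g := by
  rw [opApp_def]
  exact finsum_eq_sum_range (fun k hk => by rw [hc k hk, zero_mul])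

lemma opApp_fin_supp (A : DiffAlg V) {c : ℕ → V} (hc : (Function.support c).Finite) (g : V) :
    (Function.support fun k => c k * A.Tk k g).Finite := by
  apply hc.subset
  intro k hk
  simp only [Function.mem_support] at hk ⊢
  intro h0
  exact hk (by rw [h0, zero_mul])

lemma opApp_zero_arg (A : DiffAlg V) (c : ℕ → V) : opApp A c 0 = 0 := by
  rw [opApp_def, finsum_eq_zero_of_forall_eq_zero]
  intro k
  rw [Tk_addzero, mul_zero]

lemma opApp_add (A : DiffAlg V) {c : ℕ → V} (hc : (Function.support c).Finite) (f g : V) :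
    opApp A c (f + g) = opApp A c f + opApp A c g := by
  rw [opApp_def, opApp_def, opApp_def,
    ← finsum_add_distrib (A.opApp_fin_supp hc f) (A.opApp_fin_supp hc g)]
  apply finsum_congr
  intro k
  rw [Tk_add, mul_add]

lemma opApp_sub (A : DiffAlg V) {c : ℕ → V} (hc : (Function.support c).Finite) (f g : V) :
    opApp A c (f - g) = opApp A c f - opApp A c g := by
  have h1 : f - g + g = f := by ring
  have h2 := A.opApp_add hc (f - g) g
  rw [h1] at h2
  rw [eq_sub_iff_add_eq, ← h2]

/-- `X_P(A(f)) = (X_P A)(f) + A(X_P f)`. -/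
lemma evf_opApp (A : DiffAlg V) {a : ℕ → V} (ha : (Function.support a).Finite) (P f : V) :
    evf A P (opApp A a f)
      = opApp A (fun j => evf A P (a j)) f + opApp A a (evf A P f) := by
  obtain ⟨N, hN⟩ := exists_bound ha
  have hb : ∀ k, N ≤ k → a k = 0 := by
    intro k hk
    by_contra hc
    exact absurd (hN k hc) (by omega)
  have hb2 : ∀ k, N ≤ k → evf A P (a k) = 0 := by
    intro k hk
    rw [hb k hk, evf_zero]
  rw [A.opApp_eq_sum hb f, A.opApp_eq_sum hb2 f, A.opApp_eq_sum hb (evf A P f)]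
  have hsum : evf A P (∑ k ∈ Finset.range N, a k * A.Tk k f)
      = ∑ k ∈ Finset.range N, (A.evfHom P) (a k * A.Tk k f) :=
    map_sum (A.evfHom P) _ _
  rw [hsum]
  have e1 : ∀ k ∈ Finset.range N, (A.evfHom P) (a k * A.Tk k f)
      = evf A P (a k) * A.Tk k f + a k * A.Tk k (evf A P f) := by
    intro k _
    show evf A P (a k * A.Tk k f) = _
    rw [evf_mul, Tk_evf]
  rw [Finset.sum_congr rfl e1, Finset.sum_add_distrib]
lemma intChoose_natCast (k n : ℕ) : intChoose (↑k) n = ↑(k.choose n) := by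
  unfold intChoose
  by_cases hnk : n ≤ k
  · have hprod : ∏ i ∈ Finset.range n, ((k:ℤ) - (i:ℤ)) = ↑(k.descFactorial n) := by
      rw [Nat.descFactorial_eq_prod_range, Nat.cast_prod]
      apply Finset.prod_congr rfl
      intro i hi
      have : i ≤ k := le_trans (Nat.le_of_lt_succ (Nat.lt_succ_of_lt (Finset.mem_range.mp hi))) hnk
      rw [Nat.cast_sub this]
    rw [hprod, Nat.descFactorial_eq_factorial_mul_choose, Nat.cast_mul]
    exact Int.mul_ediv_cancel_left _ (by exact_mod_cast n.factorial_ne_zero)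
  · have hk : k ∈ Finset.range n := Finset.mem_range.mpr (by omega)
    rw [Finset.prod_eq_zero hk (by ring), Int.zero_ediv,
      Nat.choose_eq_zero_of_lt (by omega), Nat.cast_zero]

lemma loc_natCast (a : ℕ → V) (j : ℕ) : loc a (↑j : ℤ) = a j := by
  simp [loc]

lemma loc_neg {a : ℕ → V} {m : ℤ} (h : m < 0) : loc a m = 0 := by
  simp [loc, not_le.mpr h]

/-- expansion of `mulZ` on local operators as a finite double sum -/
lemma mulZ_loc_eq (A : DiffAlg V) {p : ℕ → V} (q : ℕ → V) {N : ℕ}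
    (hp : ∀ k, N ≤ k → p k = 0) (j : ℤ) :
    mulZ A (loc p) (loc q) j
      = ∑ k ∈ Finset.range N, ∑ n ∈ Finset.range N,
          (k.choose n) • (p k * A.Tk n (loc q (j - k + n))) := by
  unfold mulZ
  have hI : ∀ k₀ : ℕ, k₀ < N →
      (∑ᶠ (n : ℕ), intChoose (↑k₀) n • (loc p ↑k₀ * (fun x => A.total x)^[n] (loc q (j - ↑k₀ + ↑n))))
        = ∑ n ∈ Finset.range N, (k₀.choose n) • (p k₀ * A.Tk n (loc q (j - ↑k₀ + ↑n))) := by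
    intro k₀ hk₀
    have hbound : ∀ n, N ≤ n →
        intChoose (↑k₀) n • (loc p ↑k₀ * (fun x => A.total x)^[n] (loc q (j - ↑k₀ + ↑n))) = 0 := by
      intro n hn
      rw [intChoose_natCast, Nat.choose_eq_zero_of_lt (by omega), Nat.cast_zero, zero_smul]
    rw [finsum_eq_sum_range hbound]
    apply Finset.sum_congr rfl
    intro n _
    rw [intChoose_natCast, natCast_zsmul, loc_natCast]
    rfl
  have hsupp : (Function.support fun k : ℤ =>
      ∑ᶠ (n : ℕ), intChoose k n • (loc p k * (fun x => A.total x)^[n] (loc q (j - k + n))))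
      ⊆ ↑((Finset.range N).map ⟨(Nat.cast : ℕ → ℤ), fun a b h => by omega⟩) := by
    intro k hk
    simp only [Function.mem_support] at hk
    have hpk : loc p k ≠ 0 := by
      intro h0
      apply hk
      rw [finsum_eq_zero_of_forall_eq_zero]
      intro n
      rw [h0, zero_mul, smul_zero]
    have hk0 : 0 ≤ k := by
      by_contra hc
      exact hpk (loc_neg (by omega))
    have hkN : k.toNat < N := by
      by_contra hc
      apply hpk
      unfold loc
      rw [if_pos hk0, hp _ (by omega)]
    simp only [Finset.coe_map, Finset.coe_range, Set.mem_image, Set.mem_Iio,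
      Function.Embedding.coeFn_mk]
    exact ⟨k.toNat, hkN, by show ((k.toNat : ℕ) : ℤ) = k; omega⟩
  rw [finsum_eq_sum_of_support_subset _ hsupp, Finset.sum_map]
  apply Finset.sum_congr rfl
  intro k₀ hk₀
  exact hI k₀ (Finset.mem_range.mp hk₀)

lemma mulZ_loc_bound (A : DiffAlg V) {p q : ℕ → V} {N : ℕ}
    (hp : ∀ k, N ≤ k → p k = 0) (hq : ∀ k, N ≤ k → q k = 0) :
    ∀ j : ℕ, 2*N ≤ j → mulZ A (loc p) (loc q) ↑j = 0 := by
  intro j hj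
  rw [A.mulZ_loc_eq q hp]
  apply Finset.sum_eq_zero
  intro k hk
  apply Finset.sum_eq_zero
  intro n hn
  have hkN := Finset.mem_range.mp hk
  have hloc : loc q ((j:ℤ) - k + n) = 0 := by
    have h0 : 0 ≤ (j:ℤ) - k + n := by omega
    unfold loc
    rw [if_pos h0, hq _ (by omega)]
  rw [hloc, Tk_addzero, mul_zero, smul_zero]

lemma key_inner (A : DiffAlg V) {q : ℕ → V} {N : ℕ} (hq : ∀ l, N ≤ l → q l = 0)
    (g : V) (c : V) (k n : ℕ) (hk : k < N) (hn : n < N) :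
    ∑ j ∈ Finset.range (2*N), (k.choose n) • (c * A.Tk n (loc q ((j:ℤ) - k + n))) * A.Tk j g
      = ∑ l ∈ Finset.range N, (k.choose n) • (c * A.Tk n (q l)) * A.Tk (k - n + l) g := by
  by_cases hnk : n ≤ k
  · set S := (Finset.range N).image (fun l => k - n + l) with hS
    have hsub : S ⊆ Finset.range (2*N) := by
      intro x hx
      simp only [hS, Finset.mem_image, Finset.mem_range] at hx ⊢
      obtain ⟨l, hl, rfl⟩ := hx
      omega
    have hzero : ∀ j ∈ Finset.range (2*N), j ∉ S →
        (k.choose n) • (c * A.Tk n (loc q ((j:ℤ) - k + n))) * A.Tk j g = 0 := by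
      intro j hjr hjS
      have hloc : loc q ((j:ℤ) - k + n) = 0 := by
        by_cases h0 : (0:ℤ) ≤ (j:ℤ) - k + n
        · unfold loc
          rw [if_pos h0]
          by_cases hm : N ≤ ((j:ℤ) - k + n).toNat
          · exact hq _ hm
          · exfalso
            apply hjS
            simp only [hS, Finset.mem_image, Finset.mem_range]
            exact ⟨((j:ℤ) - k + n).toNat, by omega, by omega⟩
        · exact loc_neg (by omega)
      rw [hloc, Tk_addzero, mul_zero, smul_zero, zero_mul]
    rw [← Finset.sum_subset hsub hzero]
    rw [Finset.sum_image (by intro x _ y _ h; simp only at h; omega)]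
    apply Finset.sum_congr rfl
    intro l hl
    have harg : ((k - n + l : ℕ) : ℤ) - k + n = (l : ℤ) := by
      have : ((k - n + l : ℕ) : ℤ) = (k : ℤ) - n + l := by omega
      omega
    rw [harg, loc_natCast]
  · have h0 : k.choose n = 0 := Nat.choose_eq_zero_of_lt (by omega)
    simp [h0]

/-- KEY: application of a composition of local operators -/
lemma key (A : DiffAlg V) {p q : ℕ → V} {N : ℕ}
    (hp : ∀ k, N ≤ k → p k = 0) (hq : ∀ k, N ≤ k → q k = 0) (g : V) :
    opApp A (fun j => mulZ A (loc p) (loc q) ↑j) g = opApp A p (opApp A q g) := by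
  rw [A.opApp_eq_sum (mulZ_loc_bound A hp hq) g]
  have e1 : ∀ j ∈ Finset.range (2*N),
      mulZ A (loc p) (loc q) ↑j * A.Tk j g
        = ∑ k ∈ Finset.range N, ∑ n ∈ Finset.range N,
            (k.choose n) • (p k * A.Tk n (loc q ((j:ℤ) - k + n))) * A.Tk j g := by
    intro j _
    rw [A.mulZ_loc_eq q hp, Finset.sum_mul]
    apply Finset.sum_congr rfl
    intro k _
    rw [Finset.sum_mul]
  rw [Finset.sum_congr rfl e1]
  rw [Finset.sum_comm]
  have e2 : ∀ k ∈ Finset.range N,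
      (∑ j ∈ Finset.range (2*N), ∑ n ∈ Finset.range N,
        (k.choose n) • (p k * A.Tk n (loc q ((j:ℤ) - k + n))) * A.Tk j g)
      = ∑ n ∈ Finset.range N, ∑ l ∈ Finset.range N,
          (k.choose n) • (p k * A.Tk n (q l)) * A.Tk (k - n + l) g := by
    intro k hk
    rw [Finset.sum_comm]
    apply Finset.sum_congr rfl
    intro n hn
    exact A.key_inner hq g (p k) k n (Finset.mem_range.mp hk) (Finset.mem_range.mp hn)
  rw [Finset.sum_congr rfl e2]
  -- now the right-hand side
  have hb2 : ∀ k, N ≤ k → p k * A.Tk k (opApp A q g) = 0 := by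
    intro k hk
    rw [hp k hk, zero_mul]
  rw [A.opApp_eq_sum hp (opApp A q g), A.opApp_eq_sum hq g]
  apply Finset.sum_congr rfl
  intro k hk
  have hkN := Finset.mem_range.mp hk
  rw [Tk_sum, Finset.mul_sum]
  have e3 : ∀ l ∈ Finset.range N, p k * A.Tk k (q l * A.Tk l g)
      = ∑ n ∈ Finset.range N, (k.choose n) • (p k * A.Tk n (q l)) * A.Tk (k - n + l) g := by
    intro l _
    rw [Tk_mul]
    have hsub : Finset.range (k+1) ⊆ Finset.range N := by
      intro x hx
      simp only [Finset.mem_range] at hx ⊢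
      omega
    have hzero : ∀ n ∈ Finset.range N, n ∉ Finset.range (k+1) →
        (k.choose n) • (A.Tk n (q l) * A.Tk (k-n) (A.Tk l g)) = 0 := by
      intro n _ hn
      simp only [Finset.mem_range, not_lt] at hn
      rw [Nat.choose_eq_zero_of_lt (by omega), zero_smul]
    rw [Finset.sum_subset hsub hzero, Finset.mul_sum]
    apply Finset.sum_congr rfl
    intro n _
    rw [Tk_add_app, nsmul_eq_mul, nsmul_eq_mul]
    ring
  rw [Finset.sum_congr rfl e3]
  rw [Finset.sum_comm]
lemma sum_shift {M N i : ℕ} (hiMN : i + N ≤ M) (f : ℕ → V)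
    (hf0 : ∀ m, m < i → f m = 0) (hfN : ∀ m', N ≤ m' → f (i + m') = 0) :
    ∑ m ∈ Finset.range M, f m = ∑ m' ∈ Finset.range N, f (i + m') := by
  have hsub : (Finset.range N).image (fun m' => i + m') ⊆ Finset.range M := by
    intro x hx
    simp only [Finset.mem_image, Finset.mem_range] at hx ⊢
    obtain ⟨l, hl, rfl⟩ := hx
    omega
  have hzero : ∀ m ∈ Finset.range M, m ∉ (Finset.range N).image (fun m' => i + m') → f m = 0 := by
    intro m _ hm
    by_cases hmi : m < i
    · exact hf0 m hmi
    · have hmN : N ≤ m - i := by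
        by_contra hc
        apply hm
        simp only [Finset.mem_image, Finset.mem_range]
        exact ⟨m - i, by omega, by omega⟩
      have : m = i + (m - i) := by omega
      rw [this]
      exact hfN _ hmN
  rw [← Finset.sum_subset hsub hzero, Finset.sum_image (by intro x _ y _ h; simp only at h; omega)]

lemma dafC_fin (A : DiffAlg V) {a : ℕ → V} (ha : (Function.support a).Finite) (Q : V) :
    (Function.support (dafC A a Q)).Finite := by
  apply Set.Finite.subset (Set.Finite.biUnion ha (fun k _ => A.pdFin (a k)))
  intro j hj
  simp only [Function.mem_support] at hj
  by_contra hc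
  apply hj
  unfold dafC
  rw [finsum_eq_zero_of_forall_eq_zero]
  intro k
  by_cases hk : a k = 0
  · rw [hk, map_zero, mul_zero]
  · have : A.pd j (a k) = 0 := by
      by_contra hne
      exact hc (Set.mem_biUnion hk hne)
    rw [this, mul_zero]

lemma pd_sum (A : DiffAlg V) (m : ℕ) {ι : Type*} (s : Finset ι) (f : ι → V) :
    A.pd m (∑ i ∈ s, f i) = ∑ i ∈ s, A.pd m (f i) :=
  map_sum ((A.pd m).toLinearMap.toAddMonoidHom) f s

/-- Chain rule: `D_{A(Q)} = (D_A)_Q + A ∘ D_Q` (in applied form). -/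
lemma chainRule (A : DiffAlg V) {a : ℕ → V} (ha : (Function.support a).Finite) (Q g : V) :
    opApp A (fun m => A.pd m (opApp A a Q)) g
      = opApp A (dafC A a Q) g + opApp A a (opApp A (fun m => A.pd m Q) g) := by
  obtain ⟨N, hN⟩ := exists_bound (((ha.union (A.pdFin Q)).union
    ((A.pdFin (opApp A a Q)).union (A.dafC_fin ha Q))).union
    (Set.Finite.biUnion ha (fun k _ => A.pdFin (a k))))
  have hp : ∀ k, N ≤ k → a k = 0 := fun k hk => by
    by_contra hc
    exact absurd (hN k (by simp [Function.mem_support, hc])) (by omega)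
  have hQ : ∀ m, N ≤ m → A.pd m Q = 0 := fun m hm => by
    by_contra hc
    exact absurd (hN m (by simp [Function.mem_support, hc])) (by omega)
  have hAQ : ∀ m, N ≤ m → A.pd m (opApp A a Q) = 0 := fun m hm => by
    by_contra hc
    exact absurd (hN m (by simp [Function.mem_support, hc])) (by omega)
  have hd : ∀ j, N ≤ j → dafC A a Q j = 0 := fun j hj => by
    by_contra hc
    exact absurd (hN j (by simp [Function.mem_support, hc])) (by omega)
  have hak : ∀ k m, N ≤ m → A.pd m (a k) = 0 := by
    intro k m hm
    by_cases hk : a k = 0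
    · rw [hk, map_zero]
    · by_contra hc
      exact absurd (hN m (Set.mem_union_right _ (Set.mem_biUnion hk hc))) (by omega)
  have hAQ2 : ∀ m, 2*N ≤ m → A.pd m (opApp A a Q) = 0 := fun m hm => hAQ m (by omega)
  have hd2 : ∀ j, 2*N ≤ j → dafC A a Q j = 0 := fun j hj => hd j (by omega)
  rw [A.opApp_eq_sum hAQ2 g, A.opApp_eq_sum hd2 g, A.opApp_eq_sum hp (opApp A (fun m => A.pd m Q) g)]
  have hAQexp : opApp A a Q = ∑ k ∈ Finset.range N, a k * A.Tk k Q := A.opApp_eq_sum hp Q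
  have e1 : ∀ m ∈ Finset.range (2*N),
      A.pd m (opApp A a Q) * A.Tk m g
        = (∑ k ∈ Finset.range N, (a k * A.pd m (A.Tk k Q)) * A.Tk m g)
          + ∑ k ∈ Finset.range N, (A.Tk k Q * A.pd m (a k)) * A.Tk m g := by
    intro m _
    rw [hAQexp, A.pd_sum]
    have : ∀ k ∈ Finset.range N, A.pd m (a k * A.Tk k Q)
        = a k * A.pd m (A.Tk k Q) + A.Tk k Q * A.pd m (a k) := by
      intro k _
      rw [(A.pd m).leibniz]
      simp only [smul_eq_mul]
    rw [Finset.sum_congr rfl this, Finset.sum_mul]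
    rw [← Finset.sum_add_distrib]
    apply Finset.sum_congr rfl
    intro k _
    rw [add_mul]
  rw [Finset.sum_congr rfl e1, Finset.sum_add_distrib]
  -- second piece equals the dafC piece
  have e2 : ∑ m ∈ Finset.range (2*N), ∑ k ∈ Finset.range N,
      (A.Tk k Q * A.pd m (a k)) * A.Tk m g
      = ∑ j ∈ Finset.range (2*N), dafC A a Q j * A.Tk j g := by
    apply Finset.sum_congr rfl
    intro m _
    have : dafC A a Q m = ∑ k ∈ Finset.range N, A.Tk k Q * A.pd m (a k) := by
      unfold dafC
      apply finsum_eq_sum_range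
      intro k hk
      rw [hp k hk, map_zero, mul_zero]
    rw [this, Finset.sum_mul]
  rw [e2]
  -- first piece equals the A ∘ D_Q piece
  have e3 : ∑ m ∈ Finset.range (2*N), ∑ k ∈ Finset.range N,
      (a k * A.pd m (A.Tk k Q)) * A.Tk m g
      = ∑ k ∈ Finset.range N, a k * A.Tk k (opApp A (fun m => A.pd m Q) g) := by
    rw [Finset.sum_comm]
    apply Finset.sum_congr rfl
    intro k hk
    have hkN := Finset.mem_range.mp hk
    rw [A.opApp_eq_sum hQ g, Tk_sum, Finset.mul_sum]
    have e4 : ∀ m ∈ Finset.range (2*N), (a k * A.pd m (A.Tk k Q)) * A.Tk m g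
        = ∑ i ∈ Finset.range (k+1),
            a k * ((k.choose i) • A.Tk (k-i) (A.pdI m i Q)) * A.Tk m g := by
      intro m _
      rw [A.pd_Tk, Finset.mul_sum, Finset.sum_mul]
    rw [Finset.sum_congr rfl e4, Finset.sum_comm]
    have e5 : ∀ i ∈ Finset.range (k+1),
        ∑ m ∈ Finset.range (2*N), a k * ((k.choose i) • A.Tk (k-i) (A.pdI m i Q)) * A.Tk m g
          = ∑ m' ∈ Finset.range N,
              a k * ((k.choose i) • A.Tk (k-i) (A.pd m' Q)) * A.Tk (i+m') g := by
      intro i hi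
      have hik := Finset.mem_range.mp hi
      rw [sum_shift (show i + N ≤ 2*N by omega)
        (fun m => a k * ((k.choose i) • A.Tk (k-i) (A.pdI m i Q)) * A.Tk m g) ?h0 ?hN]
      case h0 =>
        intro m hmi
        have hz : A.pdI m i Q = 0 := by
          unfold pdI
          rw [if_neg (by omega)]
        simp only [hz, Tk_addzero, smul_zero, mul_zero, zero_mul]
      case hN =>
        intro m' hm'
        have hz : A.pdI (i+m') i Q = 0 := by
          unfold pdI
          rw [if_pos (by omega)]
          have h9 : i + m' - i = m' := by omega
          rw [h9]
          exact hQ m' hm'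
        simp only [hz, Tk_addzero, smul_zero, mul_zero, zero_mul]
      apply Finset.sum_congr rfl
      intro m' _
      have hz : A.pdI (i+m') i Q = A.pd m' Q := by
        unfold pdI
        rw [if_pos (by omega)]
        have h9 : i + m' - i = m' := by omega
        rw [h9]
      simp only [hz]
    rw [Finset.sum_congr rfl e5]
    -- common middle form
    have lhsmid : ∑ i ∈ Finset.range (k+1), ∑ m' ∈ Finset.range N,
        a k * ((k.choose i) • A.Tk (k-i) (A.pd m' Q)) * A.Tk (i+m') g
        = ∑ n ∈ Finset.range (k+1), ∑ m' ∈ Finset.range N,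
            a k * ((k.choose n) • (A.Tk n (A.pd m' Q) * A.Tk ((k-n)+m') g)) := by
      rw [← Finset.sum_range_reflect (fun n => ∑ m' ∈ Finset.range N,
        a k * ((k.choose n) • A.Tk (k-n) (A.pd m' Q)) * A.Tk (n+m') g) (k+1)]
      apply Finset.sum_congr rfl
      intro n hn
      have hnk := Finset.mem_range.mp hn
      apply Finset.sum_congr rfl
      intro m' _
      have h1 : k + 1 - 1 - n = k - n := by omega
      have h2 : k - (k - n) = n := by omega
      have h3 : (k.choose (k - n)) = k.choose n := Nat.choose_symm (by omega)
      rw [h1, h2, h3, nsmul_eq_mul, nsmul_eq_mul]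
      ring
    rw [lhsmid, Finset.sum_comm]
    apply Finset.sum_congr rfl
    intro m' _
    rw [Tk_mul, Finset.mul_sum]
    apply Finset.sum_congr rfl
    intro n _
    rw [Tk_add_app]
  rw [e3]
  exact add_comm _ _
lemma evf_eq_opApp_pd (A : DiffAlg V) (P f : V) :
    evf A P f = opApp A (fun m => A.pd m f) P := by
  rw [evf_def, opApp_def]
  exact finsum_congr (fun n => mul_comm _ _)

/-- applied recursion property: `D_P ∘ A = X_P(A) + A ∘ D_P`. -/
def Rap (A : DiffAlg V) (a : ℕ → V) (P : V) : Prop := ∀ g : V,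
  opApp A (fun m => A.pd m P) (opApp A a g)
    = opApp A (fun j => evf A P (a j)) g + opApp A a (opApp A (fun m => A.pd m P) g)

lemma rap_of_hrec (A : DiffAlg V) {a : ℕ → V} (ha : (Function.support a).Finite) {P : V}
    (hR : ∀ m : ℤ, loc (fun j => evf A P (a j)) m
      = mulZ A (DFz A P) (loc a) m - mulZ A (loc a) (DFz A P) m) :
    Rap A a P := by
  intro g
  obtain ⟨N, hN⟩ := exists_bound (ha.union (A.pdFin P))
  have hp : ∀ k, N ≤ k → a k = 0 := fun k hk => by
    by_contra hc
    exact absurd (hN k (Set.mem_union_left _ hc)) (by omega)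
  have hd : ∀ m, N ≤ m → A.pd m P = 0 := fun m hm => by
    by_contra hc
    exact absurd (hN m (Set.mem_union_right _ hc)) (by omega)
  have hDFz : DFz A P = loc (fun m => A.pd m P) := by funext m; rfl
  have hE : ∀ j, 2*N ≤ j → evf A P (a j) = 0 := fun j hj => by
    rw [hp j (by omega), evf_zero]
  have e1 : opApp A (fun j => evf A P (a j)) g
      = opApp A (fun m => A.pd m P) (opApp A a g)
        - opApp A a (opApp A (fun m => A.pd m P) g) := by
    rw [A.opApp_eq_sum hE g]
    have step : ∀ j ∈ Finset.range (2*N), evf A P (a j) * A.Tk j g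
        = mulZ A (loc (fun m => A.pd m P)) (loc a) ↑j * A.Tk j g
          - mulZ A (loc a) (loc (fun m => A.pd m P)) ↑j * A.Tk j g := by
      intro j _
      have h := hR ↑j
      rw [loc_natCast, hDFz] at h
      rw [h, sub_mul]
    rw [Finset.sum_congr rfl step, Finset.sum_sub_distrib]
    rw [← A.opApp_eq_sum (mulZ_loc_bound A hd hp) g,
      ← A.opApp_eq_sum (mulZ_loc_bound A hp hd) g]
    rw [A.key hd hp g, A.key hp hd g]
  rw [e1]
  ring

lemma rap_step (A : DiffAlg V) {a : ℕ → V} (ha : (Function.support a).Finite)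
    (her : IsHereditary A a) {P : V} (hP : Rap A a P) : Rap A a (opApp A a P) := by
  intro g
  obtain ⟨N, hN⟩ := exists_bound ((ha.union (A.pdFin P)).union
    ((A.pdFin (opApp A a P)).union (Function.support (dafC A a P) |> fun _ => A.dafC_fin ha P)))
  have hp : ∀ k, N ≤ k → a k = 0 := fun k hk => by
    by_contra hc
    exact absurd (hN k (Set.mem_union_left _ (Set.mem_union_left _ hc))) (by omega)
  have hdP : ∀ m, N ≤ m → A.pd m P = 0 := fun m hm => by
    by_contra hc
    exact absurd (hN m (Set.mem_union_left _ (Set.mem_union_right _ hc))) (by omega)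
  have hdaf : ∀ j, N ≤ j → dafC A a P j = 0 := fun j hj => by
    by_contra hc
    exact absurd (hN j (Set.mem_union_right _ (Set.mem_union_right _ hc))) (by omega)
  have hE : ∀ j, N ≤ j → evf A P (a j) = 0 := fun j hj => by
    rw [hp j hj, evf_zero]
  have hE' : ∀ j, 2*N ≤ j → evf A (opApp A a P) (a j) = 0 := fun j hj => by
    rw [hp j (by omega), evf_zero]
  have hher : ∀ j : ℕ, evf A (opApp A a P) (a j)
      = (mulZ A (loc (dafC A a P)) (loc a) ↑j - mulZ A (loc a) (loc (dafC A a P)) ↑j)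
        + mulZ A (loc a) (loc (fun j' => evf A P (a j'))) ↑j := by
    intro j
    have h := her P ↑j
    rw [loc_natCast] at h
    linear_combination h
  have e1 : opApp A (fun j => evf A (opApp A a P) (a j)) g
      = (opApp A (dafC A a P) (opApp A a g) - opApp A a (opApp A (dafC A a P) g))
        + opApp A a (opApp A (fun j => evf A P (a j)) g) := by
    rw [A.opApp_eq_sum hE' g]
    have step : ∀ j ∈ Finset.range (2*N), evf A (opApp A a P) (a j) * A.Tk j g
        = (mulZ A (loc (dafC A a P)) (loc a) ↑j * A.Tk j g
            - mulZ A (loc a) (loc (dafC A a P)) ↑j * A.Tk j g)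
          + mulZ A (loc a) (loc (fun j' => evf A P (a j'))) ↑j * A.Tk j g := by
      intro j _
      rw [hher j, add_mul, sub_mul]
    rw [Finset.sum_congr rfl step, Finset.sum_add_distrib, Finset.sum_sub_distrib]
    rw [← A.opApp_eq_sum (mulZ_loc_bound A hdaf hp) g,
      ← A.opApp_eq_sum (mulZ_loc_bound A hp hdaf) g,
      ← A.opApp_eq_sum (mulZ_loc_bound A hp hE) g]
    rw [A.key hdaf hp g, A.key hp hdaf g, A.key hp hE g]
  rw [A.chainRule ha P (opApp A a g), A.chainRule ha P g, e1]
  rw [hP g]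
  rw [A.opApp_add ha (opApp A (dafC A a P) g) (opApp A a (opApp A (fun m => A.pd m P) g))]
  rw [A.opApp_add ha (opApp A (fun j => evf A P (a j)) g)
    (opApp A a (opApp A (fun m => A.pd m P) g))]
  ring
end DiffAlg

/-- let `A` be a hereditary differential operator on `V` and `F ∈ V` such
that `A` is recursion for `F` (`X_F(A) = [D_F, A]`). Then the functions `A^n(F)`
pairwise commute: `{A^n(F), A^m(F)} = 0` for all `n, m ≥ 0`. -/
theorem hereditary_recursion_commute {V : Type} [CommRing V] [Algebra ℂ V]
    (A : DiffAlg V) (a : ℕ → V) (ha : Set.Finite (Function.support a))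
    (her : DiffAlg.IsHereditary A a) (F : V)
    (hrec : ∀ m : ℤ, DiffAlg.loc (fun j => DiffAlg.evf A F (a j)) m
      = DiffAlg.mulZ A (DiffAlg.DFz A F) (DiffAlg.loc a) m
        - DiffAlg.mulZ A (DiffAlg.loc a) (DiffAlg.DFz A F) m) :
    ∀ n m : ℕ,
      DiffAlg.evf A ((DiffAlg.opApp A a)^[n] F) ((DiffAlg.opApp A a)^[m] F)
        = DiffAlg.evf A ((DiffAlg.opApp A a)^[m] F) ((DiffAlg.opApp A a)^[n] F) := by
  open DiffAlg in
  intro n m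
  have rap_all : ∀ k : ℕ, DiffAlg.Rap A a ((DiffAlg.opApp A a)^[k] F) := by
    intro k
    induction k with
    | zero =>
      simpa using DiffAlg.rap_of_hrec A ha hrec
    | succ k ih =>
      rw [Function.iterate_succ_apply']
      exact DiffAlg.rap_step A ha her ih
  have brstep : ∀ p q : ℕ,
      DiffAlg.evf A ((DiffAlg.opApp A a)^[p] F) ((DiffAlg.opApp A a)^[q+1] F)
        - DiffAlg.evf A ((DiffAlg.opApp A a)^[q+1] F) ((DiffAlg.opApp A a)^[p] F)
      = DiffAlg.opApp A a (DiffAlg.evf A ((DiffAlg.opApp A a)^[p] F) ((DiffAlg.opApp A a)^[q] F)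
          - DiffAlg.evf A ((DiffAlg.opApp A a)^[q] F) ((DiffAlg.opApp A a)^[p] F)) := by
    intro p q
    set Gp := (DiffAlg.opApp A a)^[p] F with hGp
    set Gq := (DiffAlg.opApp A a)^[q] F with hGq
    have hit : (DiffAlg.opApp A a)^[q+1] F = DiffAlg.opApp A a Gq :=
      Function.iterate_succ_apply' _ _ _
    rw [hit]
    have h1 : DiffAlg.evf A Gp (DiffAlg.opApp A a Gq)
        = DiffAlg.opApp A (fun j => DiffAlg.evf A Gp (a j)) Gq
          + DiffAlg.opApp A a (DiffAlg.evf A Gp Gq) := A.evf_opApp ha Gp Gq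
    have h2 : DiffAlg.evf A (DiffAlg.opApp A a Gq) Gp
        = DiffAlg.opApp A (fun m => A.pd m Gp) (DiffAlg.opApp A a Gq) :=
      DiffAlg.evf_eq_opApp_pd A (DiffAlg.opApp A a Gq) Gp
    rw [h1, h2, rap_all p Gq]
    rw [← DiffAlg.evf_eq_opApp_pd A Gq Gp]
    rw [A.opApp_sub ha]
    ring
  have diag : ∀ d p : ℕ,
      DiffAlg.evf A ((DiffAlg.opApp A a)^[p] F) ((DiffAlg.opApp A a)^[p+d] F)
        - DiffAlg.evf A ((DiffAlg.opApp A a)^[p+d] F) ((DiffAlg.opApp A a)^[p] F) = 0 := by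
    intro d
    induction d with
    | zero => intro p; exact sub_self _
    | succ d ih =>
      intro p
      have h : p + (d+1) = (p+d) + 1 := rfl
      rw [h, brstep p (p+d), ih p, DiffAlg.opApp_zero_arg]
  rcases le_total n m with h | h
  · obtain ⟨d, rfl⟩ : ∃ d, m = n + d := ⟨m - n, by omega⟩
    exact sub_eq_zero.mp (diag d n)
  · obtain ⟨d, rfl⟩ : ∃ d, n = m + d := ⟨n - m, by omega⟩
    exact (sub_eq_zero.mp (diag d m)).symm
end
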